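/- Let ψ be a convex differentiable function on a convex set A with D_ψ(x, x') ≥ (1/2)‖x − x'‖_p² for some p ≥ 1. If u₁ = argmin_{w ∈ A}{⟨w, g₁⟩ + D_ψ(w, u)} and u₂ = argmin_{w ∈ A}{⟨w, g₂⟩ + D_ψ(w, u)}, then ‖u₁ − u₂‖_p ≤ ‖g₁ − g₂‖_q where 1/p + 1/q = 1. -/

import Mathlib

/-- The `p`-norm on `Fin d → ℝ`. -/
noncomputable def pnorm (p : ℝ) {d : ℕ} (x : Fin d → ℝ) : ℝ :=
  (∑ i, |x i| ^ p) ^ (1 / p)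

/-- Dot product on `Fin d → ℝ`. -/
def dotp {d : ℕ} (x y : Fin d → ℝ) : ℝ := ∑ i, x i * y i

/-- Bregman divergence associated with `ψ` with gradient field `gψ`. -/
noncomputable def breg {d : ℕ} (ψ : (Fin d → ℝ) → ℝ)
    (gψ : (Fin d → ℝ) → (Fin d → ℝ)) (a b : Fin d → ℝ) : ℝ :=
  ψ a - ψ b - dotp (gψ b) (a - b)

lemma pnorm_nonneg (p : ℝ) {d : ℕ} (x : Fin d → ℝ) : 0 ≤ pnorm p x :=
  Real.rpow_nonneg (Finset.sum_nonneg fun i _ =>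
    Real.rpow_nonneg (abs_nonneg _) _) _

lemma pnorm_neg (p : ℝ) {d : ℕ} (x : Fin d → ℝ) : pnorm p (-x) = pnorm p x := by
  simp [pnorm]

/-- Non-expansiveness of the proximal/mirror step: if `D_ψ(·,·) ≥ (1/2)‖·‖_p²`
and `u₁, u₂` are the minimizers (characterized by first-order optimality) of
`w ↦ ⟨w, g₁⟩ + D_ψ(w,u)` and `w ↦ ⟨w, g₂⟩ + D_ψ(w,u)` over the convex set `A`,
then `‖u₁ - u₂‖_p ≤ ‖g₁ - g₂‖_q` where `1/p + 1/q = 1`. -/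
theorem stmt5 (d : ℕ) (A : Set (Fin d → ℝ)) (hA : Convex ℝ A)
    (ψ : (Fin d → ℝ) → ℝ) (gψ : (Fin d → ℝ) → (Fin d → ℝ))
    (hψ : ConvexOn ℝ A ψ)
    (p q : ℝ) (hp : 1 ≤ p) (hq : 1 ≤ q) (hpq : 1 / p + 1 / q = 1)
    (hsc : ∀ a ∈ A, ∀ b ∈ A, (1 / 2) * pnorm p (a - b) ^ 2 ≤ breg ψ gψ a b)
    (u u₁ u₂ : Fin d → ℝ) (g₁ g₂ : Fin d → ℝ)
    (hu : u ∈ A) (hu₁ : u₁ ∈ A) (hu₂ : u₂ ∈ A)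
    (hopt₁ : ∀ w ∈ A, 0 ≤ dotp (g₁ + gψ u₁ - gψ u) (w - u₁))
    (hopt₂ : ∀ w ∈ A, 0 ≤ dotp (g₂ + gψ u₂ - gψ u) (w - u₂)) :
    pnorm p (u₁ - u₂) ≤ pnorm q (g₁ - g₂) := by
  have hp1 : 1 < p := by
    rcases lt_or_eq_of_le hp with h | h
    · exact h
    · exfalso
      have hq0 : 0 < 1 / q := by positivity
      rw [← h] at hpq
      simp at hpq
      linarith
  have hconj : Real.HolderConjugate p q := by
    constructor
    · rw [inv_one, ← one_div, ← one_div]; exact hpq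
    · linarith
    · linarith
  set N := pnorm p (u₁ - u₂) with hN
  set M := pnorm q (g₁ - g₂) with hM
  have hNn : 0 ≤ N := pnorm_nonneg _ _
  have hMn : 0 ≤ M := pnorm_nonneg _ _
  -- sum of optimality conditions
  have h1 := hopt₁ u₂ hu₂
  have h2 := hopt₂ u₁ hu₁
  have hkey : dotp (gψ u₁ - gψ u₂) (u₁ - u₂) ≤ dotp (g₂ - g₁) (u₁ - u₂) := by
    have heq : dotp (g₁ + gψ u₁ - gψ u) (u₂ - u₁) + dotp (g₂ + gψ u₂ - gψ u) (u₁ - u₂)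
        = dotp (g₂ - g₁) (u₁ - u₂) - dotp (gψ u₁ - gψ u₂) (u₁ - u₂) := by
      simp only [dotp, Pi.add_apply, Pi.sub_apply]
      rw [← Finset.sum_add_distrib, ← Finset.sum_sub_distrib]
      exact Finset.sum_congr rfl fun i _ => by ring
    linarith
  -- strong convexity
  have hb1 := hsc u₁ hu₁ u₂ hu₂
  have hb2 := hsc u₂ hu₂ u₁ hu₁
  have hsum : breg ψ gψ u₁ u₂ + breg ψ gψ u₂ u₁ = dotp (gψ u₁ - gψ u₂) (u₁ - u₂) := by
    simp only [breg, dotp, Pi.sub_apply]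
    have : ∀ i ∈ Finset.univ, (gψ u₁ i - gψ u₂ i) * (u₁ i - u₂ i)
        = -(gψ u₂ i * (u₁ i - u₂ i)) - gψ u₁ i * (u₂ i - u₁ i) := fun i _ => by ring
    rw [Finset.sum_congr rfl this, Finset.sum_sub_distrib, Finset.sum_neg_distrib]
    ring
  have hflip : pnorm p (u₂ - u₁) = N := by
    rw [hN, ← pnorm_neg p (u₂ - u₁)]; congr 1; abel
  have hN2 : N ^ 2 ≤ dotp (g₂ - g₁) (u₁ - u₂) := by
    rw [hflip] at hb2
    nlinarith [hkey]
  -- Hölder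
  have hhold : dotp (g₂ - g₁) (u₁ - u₂) ≤ N * M := by
    have := Real.inner_le_Lp_mul_Lq Finset.univ (fun i => (u₁ - u₂) i)
      (fun i => (g₂ - g₁) i) hconj
    have hdots : dotp (g₂ - g₁) (u₁ - u₂)
        = ∑ i, (u₁ - u₂) i * (g₂ - g₁) i := by
      simp only [dotp]
      exact Finset.sum_congr rfl fun i _ => by ring
    rw [hdots]
    refine this.trans (le_of_eq ?_)
    congr 1
    rw [hM]
    simp only [pnorm, Pi.sub_apply]
    congr 1
    exact Finset.sum_congr rfl fun i _ => by rw [abs_sub_comm]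
  rcases eq_or_lt_of_le hNn with h0 | h0
  · rw [← h0]; exact hMn
  · have : N * N ≤ N * M := by nlinarith
    exact le_of_mul_le_mul_left this h0
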